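/- The birational maps w₀, w₁, w₂, w₃ satisfy the defining relations of the affine Weyl group W(A₃⁽¹⁾) encoded by the 4-cycle Dynkin diagram α₀–α₁–α₂–α₃–α₀, at every point of ℂ⁴×ℂ×ℂ² where all denominators occurring in both compositions are nonzero: the commutation relations w₀∘w₂ = w₂∘w₀ and w₁∘w₃ = w₃∘w₁, and the braid relations w₀∘w₁∘w₀ = w₁∘w₀∘w₁, w₁∘w₂∘w₁ = w₂∘w₁∘w₂, w₂∘w₃∘w₂ = w₃∘w₂∘w₃, and w₃∘w₀∘w₃ = w₀∘w₃∘w₀. -/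

import Mathlib

/-- A point of the family of `D₅⁽¹⁾` Sakai surfaces: root variables `(a₀,a₁,a₂,a₃)`, the
independent parameter `t`, and the coordinates `(q,p)`. -/
structure PV where
  a0 : ℂ
  a1 : ℂ
  a2 : ℂ
  a3 : ℂ
  t : ℂ
  q : ℂ
  p : ℂ

/-- The Bäcklund transformation `w₀`, the reflection in the symmetry root `α₀`. -/
noncomputable def w0 (s : PV) : PV :=
  ⟨-s.a0, s.a0 + s.a1, s.a2, s.a0 + s.a3, s.t, s.q + s.a0 / (s.p + s.t), s.p⟩

/-- The Bäcklund transformation `w₁`, the reflection in the symmetry root `α₁`. -/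
noncomputable def w1 (s : PV) : PV :=
  ⟨s.a0 + s.a1, -s.a1, s.a1 + s.a2, s.a3, s.t, s.q, s.p - s.a1 / s.q⟩

/-- The Bäcklund transformation `w₂`, the reflection in the symmetry root `α₂`. -/
noncomputable def w2 (s : PV) : PV :=
  ⟨s.a0, s.a1 + s.a2, -s.a2, s.a2 + s.a3, s.t, s.q + s.a2 / s.p, s.p⟩

/-- The Bäcklund transformation `w₃`, the reflection in the symmetry root `α₃`. -/
noncomputable def w3 (s : PV) : PV :=
  ⟨s.a0 + s.a3, s.a1, s.a2 + s.a3, -s.a3, s.t, s.q, s.p - s.a3 / (s.q - 1)⟩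

/-- The Dynkin diagram automorphism `σ₁ = (α₀α₃)(α₁α₂)`. -/
noncomputable def sigma1 (s : PV) : PV :=
  ⟨s.a3, s.a2, s.a1, s.a0, -s.t, -s.p / s.t, s.q * s.t⟩

/-- The Dynkin diagram automorphism `σ₂ = (α₀α₂)`. -/
def sigma2 (s : PV) : PV :=
  ⟨s.a2, s.a1, s.a0, s.a3, -s.t, s.q, s.p + s.t⟩

/-- The Dynkin diagram automorphism `σ₃ = (α₁α₃)`. -/
def sigma3 (s : PV) : PV :=
  ⟨s.a0, s.a3, s.a2, s.a1, -s.t, 1 - s.q, -s.p⟩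

/-- The denominator-nonvanishing condition for `w₀` at `s`: `p + t ≠ 0`. -/
def Def0 (s : PV) : Prop := s.p + s.t ≠ 0

/-- The denominator-nonvanishing condition for `w₁` at `s`: `q ≠ 0`. -/
def Def1 (s : PV) : Prop := s.q ≠ 0

/-- The denominator-nonvanishing condition for `w₂` at `s`: `p ≠ 0`. -/
def Def2 (s : PV) : Prop := s.p ≠ 0

/-- The denominator-nonvanishing condition for `w₃` at `s`: `q − 1 ≠ 0`. -/
def Def3 (s : PV) : Prop := s.q - 1 ≠ 0

/-- The denominator-nonvanishing condition for `σ₁` at `s`: `t ≠ 0`. -/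
def DefS1 (s : PV) : Prop := s.t ≠ 0

set_option maxHeartbeats 2000000 in
/-- The birational maps `w₀, w₁, w₂, w₃` satisfy the defining relations of the
affine Weyl group `W(A₃⁽¹⁾)` encoded by the 4-cycle Dynkin diagram `α₀–α₁–α₂–α₃–α₀`, at every
point where all denominators occurring in both compositions are nonzero: the commutation
relations for the non-adjacent pairs and the braid relations for the adjacent pairs. -/
theorem w_affine_Weyl_relations (s : PV) :
    -- commutation relation w₀∘w₂ = w₂∘w₀
    (Def2 s → Def0 (w2 s) → Def0 s → Def2 (w0 s) → w0 (w2 s) = w2 (w0 s)) ∧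
    -- commutation relation w₁∘w₃ = w₃∘w₁
    (Def3 s → Def1 (w3 s) → Def1 s → Def3 (w1 s) → w1 (w3 s) = w3 (w1 s)) ∧
    -- braid relation w₀∘w₁∘w₀ = w₁∘w₀∘w₁
    (Def0 s → Def1 (w0 s) → Def0 (w1 (w0 s)) → Def1 s → Def0 (w1 s) → Def1 (w0 (w1 s)) →
      w0 (w1 (w0 s)) = w1 (w0 (w1 s))) ∧
    -- braid relation w₁∘w₂∘w₁ = w₂∘w₁∘w₂
    (Def1 s → Def2 (w1 s) → Def1 (w2 (w1 s)) → Def2 s → Def1 (w2 s) → Def2 (w1 (w2 s)) →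
      w1 (w2 (w1 s)) = w2 (w1 (w2 s))) ∧
    -- braid relation w₂∘w₃∘w₂ = w₃∘w₂∘w₃
    (Def2 s → Def3 (w2 s) → Def2 (w3 (w2 s)) → Def3 s → Def2 (w3 s) → Def3 (w2 (w3 s)) →
      w2 (w3 (w2 s)) = w3 (w2 (w3 s))) ∧
    -- braid relation w₃∘w₀∘w₃ = w₀∘w₃∘w₀
    (Def3 s → Def0 (w3 s) → Def3 (w0 (w3 s)) → Def0 s → Def3 (w0 s) → Def0 (w3 (w0 s)) →
      w3 (w0 (w3 s)) = w0 (w3 (w0 s))) := by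
  obtain ⟨a0,a1,a2,a3,t,q,p⟩ := s
  refine ⟨?_, ?_, ?_, ?_, ?_, ?_⟩
  · -- w0 w2 commute
    intro h1 h2 h3 h4
    simp only [Def0, Def1, Def2, Def3, w0, w1, w2, w3] at h1 h2 h3 h4
    simp only [w0, w2, PV.mk.injEq]
    constructorm* _ ∧ _ <;> first | trivial | ring1
  · -- w1 w3 commute
    intro h1 h2 h3 h4
    simp only [Def0, Def1, Def2, Def3, w0, w1, w2, w3] at h1 h2 h3 h4
    simp only [w1, w3, PV.mk.injEq]
    constructorm* _ ∧ _ <;> first | trivial | ring1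
  · -- braid w0 w1
    intro h1 h2 h3 h4 h5 h6
    simp only [Def0, Def1, Def2, Def3, w0, w1, w2, w3] at h1 h2 h3 h4 h5 h6
    have E1 : q + a0/(p+t) = (q*(p+t)+a0)/(p+t) := by field_simp; try ring
    have E2 : p - a1/q + t = ((p+t)*q - a1)/q := by field_simp; try ring
    rw [E1] at h2 h3
    rw [E2] at h5 h6
    have HA : q*(p+t)+a0 ≠ 0 := fun h => h2 (by rw [h, zero_div])
    have HC : (p+t)*q - a1 ≠ 0 := fun h => h5 (by rw [h, zero_div])
    have HB := mul_ne_zero h3 HA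
    have HD := mul_ne_zero h6 HC
    field_simp at HB HD
    have N1 : q*(p+t) - a1 ≠ 0 := by rwa [mul_comm (p+t) q] at HC
    have N2 : p*(q*(p+t)+a0) - (p+t)*(a0+a1) + t*(q*(p+t)+a0) ≠ 0 := by
      rwa [mul_comm (p+t) (a0+a1)]
    have N3 : 1 + (a0+a1)/(q*(p+t) - a1) ≠ 0 := right_ne_zero_of_mul HD
    have N4 : q*(p+t) - a1 + (a0+a1) ≠ 0 := fun h => N3 (by rw [one_add_div N1, h, zero_div])
    simp only [w0, w1, PV.mk.injEq]
    constructorm* _ ∧ _ <;>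
      first
        | trivial
        | ring1
        | (rw [E1, E2]; field_simp; ring)
  · -- braid w1 w2
    intro h1 h2 h3 h4 h5 h6
    simp only [Def0, Def1, Def2, Def3, w0, w1, w2, w3] at h1 h2 h3 h4 h5 h6
    have E1 : p - a1/q = (q*p - a1)/q := by field_simp; try ring
    have E2 : q + a2/p = (q*p + a2)/p := by field_simp; try ring
    rw [E1] at h2 h3
    rw [E2] at h5 h6
    have HA : q*p - a1 ≠ 0 := fun h => h2 (by rw [h, zero_div])
    have HC : q*p + a2 ≠ 0 := fun h => h5 (by rw [h, zero_div])
    have HB := mul_ne_zero h3 HA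
    have HD := mul_ne_zero h6 HC
    field_simp at HB HD
    have N1 : q*p - a1 + (a1+a2) ≠ 0 := right_ne_zero_of_mul HB
    have N2 : q*p + a2 - (a1+a2) ≠ 0 := right_ne_zero_of_mul HD
    simp only [w1, w2, PV.mk.injEq]
    constructorm* _ ∧ _ <;>
      first
        | trivial
        | ring1
        | (rw [E1, E2]; field_simp; ring)
  · -- braid w2 w3
    intro h1 h2 h3 h4 h5 h6
    simp only [Def0, Def1, Def2, Def3, w0, w1, w2, w3] at h1 h2 h3 h4 h5 h6
    have E1 : q + a2/p - 1 = ((q-1)*p + a2)/p := by field_simp; try ring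
    have E2 : p - a3/(q-1) = (p*(q-1) - a3)/(q-1) := by field_simp; try ring
    rw [E1] at h2 h3
    rw [E2] at h5 h6
    have HA : (q-1)*p + a2 ≠ 0 := fun h => h2 (by rw [h, zero_div])
    have HC : p*(q-1) - a3 ≠ 0 := fun h => h5 (by rw [h, zero_div])
    have HB := mul_ne_zero h3 HA
    have HD := mul_ne_zero h6 HC
    field_simp at HB HD
    have N1 : p*(q-1) + a2 ≠ 0 := by rwa [mul_comm (q-1) p] at HA
    have N2 : 1 - (a2+a3)/(p*(q-1)+a2) ≠ 0 := right_ne_zero_of_mul HB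
    have N3 : p*(q-1) + a2 - (a2+a3) ≠ 0 := fun h => N2 (by rw [one_sub_div N1, h, zero_div])
    simp only [w2, w3, PV.mk.injEq]
    constructorm* _ ∧ _ <;>
      first
        | trivial
        | ring1
        | (rw [E1, E2]; field_simp; ring)
  · -- braid w3 w0
    intro h1 h2 h3 h4 h5 h6
    simp only [Def0, Def1, Def2, Def3, w0, w1, w2, w3] at h1 h2 h3 h4 h5 h6
    have E1 : p - a3/(q-1) + t = ((p+t)*(q-1) - a3)/(q-1) := by field_simp; try ring
    have E2 : q + a0/(p+t) - 1 = ((q-1)*(p+t) + a0)/(p+t) := by field_simp; try ring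
    rw [E1] at h2 h3
    rw [E2] at h5 h6
    have HA : (p+t)*(q-1) - a3 ≠ 0 := fun h => h2 (by rw [h, zero_div])
    have HC : (q-1)*(p+t) + a0 ≠ 0 := fun h => h5 (by rw [h, zero_div])
    have HB := mul_ne_zero h3 HA
    have HD := mul_ne_zero h6 HC
    field_simp at HB HD
    have N1 : (q-1)*(p+t) - a3 ≠ 0 := by rwa [mul_comm (p+t) (q-1)] at HA
    have N2 : (p+t)*(q-1) + a0 ≠ 0 := by rwa [mul_comm (q-1) (p+t)] at HC
    have N3 : p - (a0+a3)*(p+t)/((p+t)*(q-1)+a0) + t ≠ 0 := right_ne_zero_of_mul HD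
    have N4 : q + (q-1)*(a0+a3)/((q-1)*(p+t) - a3) - 1 ≠ 0 := by
      rw [show q + (q-1)*(a0+a3)/((q-1)*(p+t) - a3) - 1
          = (q*((p+t)*(q-1) - a3) + (a0+a3)*(q-1) - ((p+t)*(q-1) - a3))/((q-1)*(p+t) - a3) by
        field_simp]
      exact div_ne_zero HB N1
    have N5 : q*((q-1)*(p+t) - a3) + (q-1)*(a0+a3) - ((q-1)*(p+t) - a3) ≠ 0 := by
      rw [mul_comm (q-1) (p+t), mul_comm (q-1) (a0+a3)]; exact HB
    have N6 : p*((p+t)*(q-1)+a0) - (a0+a3)*(p+t) + t*((p+t)*(q-1)+a0) ≠ 0 := by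
      intro h; apply N3
      rw [show p - (a0+a3)*(p+t)/((p+t)*(q-1)+a0) + t
          = (p*((p+t)*(q-1)+a0) - (a0+a3)*(p+t) + t*((p+t)*(q-1)+a0))/((p+t)*(q-1)+a0) by
        rw [eq_div_iff N2]; field_simp]
      rw [h, zero_div]
    simp only [w3, w0, PV.mk.injEq]
    constructorm* _ ∧ _ <;>
      first
        | trivial
        | ring1
        | (rw [E1, E2]; field_simp; ring)
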